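/- Let Λ = (λ, χ^1,...,χ^N) with λ even, χ^i odd satisfying [χ^i,χ^j] = -2δ_{ij}λ and [λ,χ^i]=0 (the N_K=N parameter algebra). Setting (Z-W)Λ = (z-w-Σθ^iζ^i)λ + Σ(θ^i-ζ^i)χ^i, the exponential exp((Z-W)Λ) satisfies D^i_Z exp((Z-W)Λ) = χ^i exp((Z-W)Λ), where D^i_Z = ∂_{θ^i} + θ^i∂_z. -/

import Mathlib

noncomputable section

/-- The Grassmann algebra on `k` groups of `N` odd generators (e.g. `θ`'s, `ζ`'s, `χ`'s),
modelled as an exterior algebra. -/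
abbrev Gr (k N : ℕ) : Type := ExteriorAlgebra ℂ (Fin k × Fin N → ℂ)

/-- The `i`-th odd generator of the `g`-th group. -/
def gv {k N : ℕ} (g : Fin k) (i : Fin N) : Gr k N :=
  ExteriorAlgebra.ι ℂ (Pi.single (g, i) (1:ℂ))

/-- The odd (left) derivative with respect to the `i`-th generator of group `g`,
realized as contraction in the exterior algebra. -/
def dgv {k N : ℕ} (g : Fin k) (i : Fin N) : Module.End ℂ (Gr k N) :=
  CliffordAlgebra.contractLeft (LinearMap.proj (g, i))

/-- Iterated odd derivative extracting the coefficient of the full top monomial of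
group `g` (applying `∂_1` first, then `∂_2`, etc.). -/
def resG {k N : ℕ} (g : Fin k) : Module.End ℂ (Gr k N) :=
  (((List.finRange N).map (dgv g)).reverse).prod

/-- The reordering sign `σ(I,J)` determined by `θ^I θ^J = σ(I,J) θ^{I∪J}` for disjoint
ordered subsets, and `0` otherwise. -/
def sgn {N : ℕ} (I J : Finset (Fin N)) : ℤ :=
  if Disjoint I J then (-1)^(((I ×ˢ J).filter (fun p => p.2 < p.1)).card) else 0

/-- Ordered (increasing) product of the elements `f i`, `i ∈ J`. -/
def oprod {k N : ℕ} (J : Finset (Fin N)) (f : Fin N → Gr k N) : Gr k N :=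
  ((J.sort (· ≤ ·)).map f).prod

namespace Stmt17

variable {N : ℕ}

-- group 0 = θ's, group 1 = ζ's.  The odd N_K parameters χ^i (which do NOT square to
-- zero: [χ^i,χ^j] = -2δ_{ij}λ) are encoded by the index `K : Finset (Fin N)`, and the
-- `λ`-degree by an index `k : ℕ`; monomials are normal-ordered as
-- `z^a w^b λ^k χ^K ⋅ (θζ-part)`.

/-- Formal series in `z, w, λ, χ` with Grassmann (`θ,ζ`) coefficients. -/
abbrev NKSeries (N : ℕ) : Type := ℤ → ℤ → ℕ → Finset (Fin N) → Gr 2 N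

/-- `Σ_i θ^i ζ^i`. -/
def qq (N : ℕ) : Gr 2 N := ∑ i : Fin N, gv 0 i * gv 1 i

/-- `(θ-ζ)^K`. -/
def tK (K : Finset (Fin N)) : Gr 2 N := oprod K (fun i => gv 0 i - gv 1 i)

/-- The coefficient of `z^a w^b λ^k` in `exp((z - w - Σθ^iζ^i)λ)`. -/
def expEvenCoef (N : ℕ) (a b : ℤ) (k : ℕ) : Gr 2 N :=
  (k.factorial : ℂ)⁻¹ • ∑ r ∈ Finset.range (k + 1),
    (if 0 ≤ a ∧ 0 ≤ b ∧ a + b = ((k : ℤ) - r) then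
      ((-1 : ℂ)^r * (k.choose r) * (-1 : ℂ)^(b.toNat) * ((k - r).choose b.toNat))
    else 0) • (qq N)^r

/-- The exponential `exp((Z-W)Λ) = exp((z-w-Σθ^iζ^i)λ + Σ(θ^i-ζ^i)χ^i)` in the `N_K`
case, written in normal-ordered coefficients. -/
def expNK (N : ℕ) : NKSeries N :=
  fun a b k K =>
    ((-1 : ℂ)^(K.card * (K.card + 1) / 2)) •
      (expEvenCoef N a b k * tK K)

/-- Left multiplication by `χ^i`, using the relations `χ^iχ^j + χ^jχ^i = -2δ_{ij}λ`. -/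
def chiMul (i : Fin N) (F : NKSeries N) : NKSeries N :=
  fun a b k K =>
    (if i ∈ K then ((sgn {i} (K.erase i) : ℂ)) • F a b k (K.erase i) else 0) +
    (if i ∉ K ∧ 1 ≤ k then
      (-((-1 : ℂ)^((K.filter (· < i)).card))) • F a b (k - 1) (insert i K)
    else 0)

/-- The super derivative `D^i_Z = ∂_{θ^i} + θ^i ∂_z` (the sign `(-1)^{|K|}` accounts for
passing the odd operator through `χ^K`). -/
def DZ (i : Fin N) (F : NKSeries N) : NKSeries N :=
  fun a b k K =>
    ((-1 : ℂ)^(K.card)) •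
      (dgv 0 i (F a b k K) + gv 0 i * (((a : ℂ) + 1) • F (a + 1) b k K))

section Aux
variable {N : ℕ}

local notation "ιv" => ExteriorAlgebra.ι ℂ (M := Fin 2 × Fin N → ℂ)

theorem iota_anticomm (u v : Fin 2 × Fin N → ℂ) : ιv u * ιv v = -(ιv v * ιv u) := by
  have h := ExteriorAlgebra.ι_sq_zero (R := ℂ) (u + v)
  simp only [map_add, add_mul, mul_add, ExteriorAlgebra.ι_sq_zero, zero_add, add_zero] at h
  rw [eq_neg_iff_add_eq_zero, add_comm]; exact h

theorem dgv_iota_mul (g : Fin 2) (i : Fin N) (v : Fin 2 × Fin N → ℂ) (x : Gr 2 N) :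
    dgv g i (ιv v * x) = v (g, i) • x - ιv v * dgv g i x := by
  simpa [dgv, ExteriorAlgebra.ι] using
    CliffordAlgebra.contractLeft_ι_mul
      (d := (LinearMap.proj (g, i) : (Fin 2 × Fin N → ℂ) →ₗ[ℂ] ℂ)) v x

theorem dgv_one (g : Fin 2) (i : Fin N) : dgv g i (1 : Gr 2 N) = 0 := by
  simpa [dgv] using CliffordAlgebra.contractLeft_one
    (d := (LinearMap.proj (g, i) : (Fin 2 × Fin N → ℂ) →ₗ[ℂ] ℂ))

theorem deg2_commute (u v : Fin 2 × Fin N → ℂ) (x : Gr 2 N) :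
    Commute (ιv u * ιv v) x := by
  induction x using CliffordAlgebra.induction with
  | algebraMap r => exact (Algebra.commutes r _).symm
  | ι m =>
      unfold Commute SemiconjBy
      rw [mul_assoc, iota_anticomm v m, mul_neg, ← mul_assoc, iota_anticomm u m, neg_mul,
        neg_neg, mul_assoc]
  | mul a b ha hb => exact ha.mul_right hb
  | add a b ha hb => exact ha.add_right hb

theorem gv_eq (g : Fin 2) (i : Fin N) : gv g i = ιv (Pi.single (g, i) (1:ℂ)) := rfl

theorem qq_commute (x : Gr 2 N) : Commute (qq N) x :=
  Commute.sum_left _ _ _ (fun i _ => deg2_commute _ _ x)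

theorem qq_pow_commute (r : ℕ) (x : Gr 2 N) : Commute (qq N ^ r) x :=
  (qq_commute x).pow_left r

/-- vector for `θ^i - ζ^i` -/
def tv (i : Fin N) : Fin 2 × Fin N → ℂ :=
  Pi.single ((0 : Fin 2), i) (1:ℂ) - Pi.single ((1 : Fin 2), i) (1:ℂ)

def fv (i : Fin N) : Gr 2 N := gv 0 i - gv 1 i

theorem fv_eq (i : Fin N) : fv i = ιv (tv i) := by
  simp [fv, tv, gv, map_sub]

theorem tv_apply0 (i j : Fin N) : tv i ((0 : Fin 2), j) = if j = i then 1 else 0 := by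
  simp [tv, Pi.single_apply, Prod.ext_iff]

theorem fv_anticomm (a b : Fin N) : fv a * fv b = -(fv b * fv a) := by
  rw [fv_eq, fv_eq, iota_anticomm]

theorem fv_sq (a : Fin N) : fv a * fv a = 0 := by
  rw [fv_eq, ExteriorAlgebra.ι_sq_zero]

theorem fv_commute_qq (a : Fin N) (r : ℕ) : qq N ^ r * fv a = fv a * qq N ^ r :=
  (qq_pow_commute r (fv a)).eq

theorem dgv_fv_mul (i a : Fin N) (x : Gr 2 N) :
    dgv 0 i (fv a * x) = (if i = a then (1:ℂ) else 0) • x - fv a * dgv 0 i x := by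
  rw [fv_eq, dgv_iota_mul, tv_apply0]

end Aux
section Aux2
variable {N : ℕ}

/-- product of `fv` over a list -/
def prodF (l : List (Fin N)) : Gr 2 N := (l.map fv).prod

@[simp] theorem prodF_nil : prodF ([] : List (Fin N)) = 1 := rfl
@[simp] theorem prodF_cons (a : Fin N) (l : List (Fin N)) :
    prodF (a :: l) = fv a * prodF l := by simp [prodF]

theorem tK_eq_prodF (K : Finset (Fin N)) : tK K = prodF (K.sort (· ≤ ·)) := rfl

theorem dgv_prodF_notMem (i : Fin N) (l : List (Fin N)) (h : i ∉ l) :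
    dgv 0 i (prodF l) = 0 := by
  induction l with
  | nil => simpa using dgv_one 0 i
  | cons a l ih =>
      have hia : i ≠ a := fun hh => h (hh ▸ List.mem_cons_self)
      have hil : i ∉ l := fun hh => h (List.mem_cons_of_mem a hh)
      rw [prodF_cons, dgv_fv_mul, if_neg hia, ih hil]
      simp

theorem fv_mul_prodF_mem (i : Fin N) (l : List (Fin N)) (h : i ∈ l) :
    fv i * prodF l = 0 := by
  induction l with
  | nil => simp at h
  | cons a l ih =>
      rcases List.mem_cons.mp h with h | h
      · subst h; rw [prodF_cons, ← mul_assoc, fv_sq, zero_mul]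
      · rw [prodF_cons, ← mul_assoc, fv_anticomm i a, neg_mul, mul_assoc, ih h]
        simp

theorem prodF_orderedInsert (i : Fin N) (l : List (Fin N))
    (hs : l.Pairwise (· ≤ ·)) (h : i ∉ l) :
    prodF (l.orderedInsert (· ≤ ·) i)
      = ((-1 : ℂ))^((l.filter (fun j => j < i)).length) • (fv i * prodF l) := by
  induction l with
  | nil => simp
  | cons a l ih =>
      have hia : i ≠ a := fun hh => h (hh ▸ List.mem_cons_self)
      have hil : i ∉ l := fun hh => h (List.mem_cons_of_mem a hh)
      by_cases hle : i ≤ a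
      · rw [List.orderedInsert]
        rw [if_pos hle]
        have hlt : i < a := lt_of_le_of_ne hle hia
        have hfil : (a :: l).filter (fun j => decide (j < i)) = [] := by
          rw [List.filter_eq_nil_iff]
          intro c hc
          rcases List.mem_cons.mp hc with rfl | hc
          · simp [not_lt.mpr hle]
          · have : a ≤ c := (List.pairwise_cons.mp hs).1 c hc
            simp [not_lt.mpr (le_trans hle this)]
        rw [hfil]
        simp
      · have hlt : a < i := lt_of_not_ge hle
        rw [List.orderedInsert, if_neg hle, prodF_cons,
          ih (List.pairwise_cons.mp hs).2 hil]
        have hfil : (a :: l).filter (fun j => decide (j < i))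
            = a :: l.filter (fun j => decide (j < i)) := by
          rw [List.filter_cons_of_pos]
          simp [hlt]
        rw [hfil]
        rw [mul_smul_comm, ← mul_assoc, fv_anticomm a i, neg_mul, mul_assoc]
        rw [List.length_cons, pow_succ]
        simp [smul_smul, mul_comm]

theorem sort_insert_eq (i : Fin N) (K : Finset (Fin N)) (h : i ∉ K) :
    (insert i K).sort (· ≤ ·) = (K.sort (· ≤ ·)).orderedInsert (· ≤ ·) i := by
  apply List.Perm.eq_of_pairwise' (Finset.pairwise_sort _ _)
    ((Finset.pairwise_sort (s := K) (r := (· ≤ ·))).orderedInsert i _) ?_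
  have h1 : ((insert i K).sort (· ≤ ·) : Multiset (Fin N)) = (insert i K).val :=
    Finset.sort_eq _ _
  have h2 : ((K.sort (· ≤ ·)).orderedInsert (· ≤ ·) i : Multiset (Fin N))
      = (insert i K).val := by
    have hp : ((K.sort (· ≤ ·)).orderedInsert (· ≤ ·) i).Perm (i :: K.sort (· ≤ ·)) :=
      List.perm_orderedInsert _ _ _
    calc ((K.sort (· ≤ ·)).orderedInsert (· ≤ ·) i : Multiset (Fin N))
        = ((i :: K.sort (· ≤ ·) : List (Fin N)) : Multiset (Fin N)) :=
          Multiset.coe_eq_coe.mpr hp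
      _ = i ::ₘ (K.sort (· ≤ ·) : Multiset (Fin N)) := rfl
      _ = i ::ₘ K.val := by rw [Finset.sort_eq]
      _ = (insert i K).val := by rw [Finset.insert_val, Multiset.ndinsert_of_notMem h]
  exact Multiset.coe_eq_coe.mp (h1.trans h2.symm)

theorem filter_length_eq_card (i : Fin N) (K : Finset (Fin N)) :
    ((K.sort (· ≤ ·)).filter (fun j => j < i)).length = (K.filter (· < i)).card := by
  have : (K.filter (· < i)).val = (K.val).filter (· < i) := Finset.filter_val _ _
  rw [Finset.card_def, this, ← Finset.sort_eq (s := K) (r := (· ≤ ·)), Multiset.filter_coe,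
    Multiset.coe_card]

theorem tK_insert (i : Fin N) (K : Finset (Fin N)) (h : i ∉ K) :
    tK (insert i K) = ((-1 : ℂ))^((K.filter (· < i)).card) • (fv i * tK K) := by
  rw [tK_eq_prodF, tK_eq_prodF, sort_insert_eq i K h,
    prodF_orderedInsert i _ (Finset.pairwise_sort _ _) (by simpa using h),
    filter_length_eq_card]

end Aux2
section Aux3
variable {N : ℕ}

theorem filter_erase_lt (i : Fin N) (K : Finset (Fin N)) :
    (K.erase i).filter (· < i) = K.filter (· < i) := by
  ext j
  simp only [Finset.mem_filter, Finset.mem_erase]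
  constructor
  · rintro ⟨⟨-, hj⟩, hlt⟩; exact ⟨hj, hlt⟩
  · rintro ⟨hj, hlt⟩; exact ⟨⟨ne_of_lt hlt, hj⟩, hlt⟩

theorem tK_erase (i : Fin N) (K : Finset (Fin N)) (h : i ∈ K) :
    tK K = ((-1 : ℂ))^((K.filter (· < i)).card) • (fv i * tK (K.erase i)) := by
  have h1 : i ∉ K.erase i := Finset.notMem_erase i K
  have h2 := tK_insert i (K.erase i) h1
  rw [Finset.insert_erase h, filter_erase_lt] at h2
  exact h2

theorem fv_mul_tK_mem (i : Fin N) (K : Finset (Fin N)) (h : i ∈ K) :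
    fv i * tK K = 0 := by
  rw [tK_erase i K h, mul_smul_comm, ← mul_assoc, fv_sq, zero_mul, smul_zero]

theorem dgv_tK_notMem (i : Fin N) (K : Finset (Fin N)) (h : i ∉ K) :
    dgv 0 i (tK K) = 0 := by
  rw [tK_eq_prodF]
  exact dgv_prodF_notMem i _ (by simpa using h)

theorem dgv_tK_mem (i : Fin N) (K : Finset (Fin N)) (h : i ∈ K) :
    dgv 0 i (tK K) = ((-1 : ℂ))^((K.filter (· < i)).card) • tK (K.erase i) := by
  rw [tK_erase i K h, map_smul, dgv_fv_mul, if_pos rfl,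
    dgv_tK_notMem i _ (Finset.notMem_erase i K)]
  simp

theorem sgn_single_erase (i : Fin N) (K : Finset (Fin N)) (h : i ∈ K) :
    (sgn {i} (K.erase i) : ℂ) = ((-1 : ℂ))^((K.filter (· < i)).card) := by
  have hd : Disjoint {i} (K.erase i) := by
    simp [Finset.disjoint_singleton_left]
  rw [sgn, if_pos hd]
  have hcard : (({i} ×ˢ (K.erase i)).filter (fun p => p.2 < p.1)).card
      = (K.filter (· < i)).card := by
    rw [← filter_erase_lt i K]
    apply Finset.card_bij (fun p _ => p.2)
    · rintro ⟨x, y⟩ hp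
      simp only [Finset.mem_filter, Finset.mem_product, Finset.mem_singleton] at hp
      rcases hp with ⟨⟨rfl, hy⟩, hlt⟩
      simp [Finset.mem_filter, hy, hlt]
    · rintro ⟨x, y⟩ hp ⟨x', y'⟩ hp' hxy
      simp only [Finset.mem_filter, Finset.mem_product, Finset.mem_singleton] at hp hp'
      cases hxy
      rw [Prod.ext_iff]
      exact ⟨hp.1.1.trans hp'.1.1.symm, rfl⟩
    · intro y hy
      simp only [Finset.mem_filter] at hy
      refine ⟨(i, y), ?_, rfl⟩
      have := Finset.mem_erase.mp hy.1
      simp [Finset.mem_filter, Finset.mem_erase, hy.1, hy.2, this.1, this.2]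
  rw [hcard]
  push_cast
  ring

theorem dgv_qq_mul (i : Fin N) (x : Gr 2 N) :
    dgv 0 i (qq N * x) = gv 1 i * x + qq N * dgv 0 i x := by
  rw [qq, Finset.sum_mul, map_sum]
  have key : ∀ j : Fin N, dgv (0 : Fin 2) i (gv 0 j * gv 1 j * x)
      = (if j = i then gv 1 i * x else 0) + gv 0 j * gv 1 j * dgv 0 i x := by
    intro j
    rw [mul_assoc, gv_eq, dgv_iota_mul, gv_eq, dgv_iota_mul, ← gv_eq, ← gv_eq]
    have h0 : (Pi.single ((0 : Fin 2), j) (1:ℂ) : Fin 2 × Fin N → ℂ) ((0 : Fin 2), i)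
        = if j = i then (1:ℂ) else 0 := by
      simp [Pi.single_apply, Prod.ext_iff, eq_comm]
    have h1 : (Pi.single ((1 : Fin 2), j) (1:ℂ) : Fin 2 × Fin N → ℂ) ((0 : Fin 2), i) = 0 := by
      simp [Pi.single_apply, Prod.ext_iff, Fin.ext_iff]
    rw [h0, h1]
    by_cases hji : j = i
    · subst hji; simp [mul_sub, mul_assoc]
    · simp [hji, mul_sub, mul_assoc]
  rw [Finset.sum_congr rfl (fun j _ => key j)]
  rw [Finset.sum_add_distrib, Finset.sum_ite_eq' Finset.univ i]
  simp [Finset.sum_mul, qq, Finset.mem_univ]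

theorem dgv_qq_pow_succ_mul (i : Fin N) (r : ℕ) (x : Gr 2 N) :
    dgv 0 i (qq N ^ (r+1) * x)
      = ((r : ℂ)+1) • (gv 1 i * (qq N ^ r * x)) + qq N ^ (r+1) * dgv 0 i x := by
  induction r generalizing x with
  | zero => simpa using dgv_qq_mul i x
  | succ r ih =>
      have h1 : qq N ^ (r+2) * x = qq N * (qq N ^ (r+1) * x) := by
        rw [← mul_assoc, ← pow_succ']
      rw [h1, dgv_qq_mul, ih]
      have e1 : qq N * (((r:ℂ)+1) • (gv 1 i * (qq N ^ r * x)) + qq N ^ (r+1) * dgv 0 i x)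
          = ((r:ℂ)+1) • (gv 1 i * (qq N ^ (r+1) * x)) + qq N ^ (r+2) * dgv 0 i x := by
        rw [mul_add, mul_smul_comm, ← mul_assoc, (qq_commute (gv 1 i)).eq, mul_assoc,
          ← mul_assoc (qq N), ← pow_succ', ← mul_assoc (qq N), ← pow_succ']
      rw [e1]
      push_cast
      module

end Aux3
section Aux4
variable {N : ℕ}

/-- scalar coefficients of `expEvenCoef` -/
def ec (a b : ℤ) (k r : ℕ) : ℂ :=
  if 0 ≤ a ∧ 0 ≤ b ∧ a + b = ((k : ℤ) - r) then
    ((-1 : ℂ)^r * (k.choose r) * (-1 : ℂ)^(b.toNat) * ((k - r).choose b.toNat))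
  else 0

theorem expEvenCoef_eq (a b : ℤ) (k : ℕ) :
    expEvenCoef N a b k
      = (k.factorial : ℂ)⁻¹ • ∑ r ∈ Finset.range (k + 1), ec a b k r • (qq N)^r := rfl

theorem ec_pos {a b : ℤ} {k r : ℕ} (h : 0 ≤ a ∧ 0 ≤ b ∧ a + b = ((k : ℤ) - r)) :
    ec a b k r
      = (-1 : ℂ)^r * (k.choose r) * (-1 : ℂ)^(b.toNat) * ((k - r).choose b.toNat) :=
  if_pos h

theorem ec_neg {a b : ℤ} {k r : ℕ} (h : ¬(0 ≤ a ∧ 0 ≤ b ∧ a + b = ((k : ℤ) - r))) :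
    ec a b k r = 0 := if_neg h

theorem nat_core (a b : ℕ) :
    (a+1) * (a+b+1).choose b = (a+b+1) * ((a+b).choose b) := by
  have h1 := Nat.add_one_mul_choose_eq (a+b) b
  have h2 := Nat.choose_succ_right_eq (a+b+1) b
  have h3 : a + b + 1 - b = a + 1 := by omega
  rw [h3] at h2
  have h4 : (a+b+1) * ((a+b).choose b) = (a+b+1).choose (b+1) * (b+1) := h1
  rw [h4, h2, mul_comm]

theorem ec_zero_of_top (a b : ℤ) (k r : ℕ) (h : k < r) : ec a b k r = 0 := by
  apply ec_neg
  rintro ⟨ha, hb, hab⟩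
  omega

theorem ec_S1 (a b : ℤ) (k r : ℕ) :
    ((r : ℂ)+1) * ec a b k (r+1) = (-((a : ℂ)+1)) * ec (a+1) b k r := by
  by_cases h1 : 0 ≤ a ∧ 0 ≤ b ∧ a + b = ((k : ℤ) - ((r+1 : ℕ) : ℤ))
  · obtain ⟨ha, hb, hab⟩ := h1
    rw [ec_pos ⟨ha, hb, hab⟩, ec_pos ⟨by omega, hb, by push_cast at hab ⊢; omega⟩]
    obtain ⟨an, rfl⟩ := Int.eq_ofNat_of_zero_le ha
    obtain ⟨bn, rfl⟩ := Int.eq_ofNat_of_zero_le hb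
    have hk : an + bn + (r+1) = k := by push_cast at hab; omega
    have htn : ((bn : ℤ)).toNat = bn := by omega
    rw [htn]
    have e1 : k - (r+1) = an + bn := by omega
    have e2 : k - r = an + bn + 1 := by omega
    rw [e1, e2]
    have key : (r+1) * k.choose (r+1) * ((an+bn).choose bn)
        = (an+1) * k.choose r * ((an+bn+1).choose bn) := by
      have hc : k.choose (r+1) * (r+1) = k.choose r * (k - r) :=
        Nat.choose_succ_right_eq k r
      rw [e2] at hc
      calc (r+1) * k.choose (r+1) * ((an+bn).choose bn)
          = (k.choose (r+1) * (r+1)) * ((an+bn).choose bn) := by ring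
        _ = (k.choose r * (an+bn+1)) * ((an+bn).choose bn) := by rw [hc]
        _ = (k.choose r) * ((an+bn+1) * ((an+bn).choose bn)) := by ring
        _ = (k.choose r) * ((an+1) * ((an+bn+1).choose bn)) := by rw [← nat_core]
        _ = (an+1) * k.choose r * ((an+bn+1).choose bn) := by ring
    have keyC : ((r:ℂ)+1) * (k.choose (r+1) : ℕ) * (((an+bn).choose bn : ℕ))
        = ((an:ℂ)+1) * ((k.choose r : ℕ)) * (((an+bn+1).choose bn : ℕ)) := by
      exact_mod_cast congrArg (fun n : ℕ => (n : ℂ)) key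
    push_cast
    linear_combination (-((-1:ℂ)^r * (-1:ℂ)^bn)) * keyC
  · rw [ec_neg h1]
    by_cases h2 : 0 ≤ a + 1 ∧ 0 ≤ b ∧ (a+1) + b = ((k : ℤ) - r)
    · obtain ⟨ha, hb, hab⟩ := h2
      have ha' : a = -1 := by
        by_contra hne
        exact h1 ⟨by omega, hb, by push_cast; omega⟩
      rw [ec_pos ⟨ha, hb, hab⟩, ha']
      push_cast
      ring
    · rw [ec_neg h2, mul_zero, mul_zero]

theorem ec_S2 (a b : ℤ) (k r : ℕ) :
    ((a : ℂ)+1) * ec (a+1) b (k+1) r = ((k : ℂ)+1) * ec a b k r := by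
  by_cases h1 : 0 ≤ a ∧ 0 ≤ b ∧ a + b = ((k : ℤ) - r)
  · obtain ⟨ha, hb, hab⟩ := h1
    rw [ec_pos ⟨ha, hb, hab⟩, ec_pos (show 0 ≤ a + 1 ∧ 0 ≤ b ∧ (a+1) + b
      = (((k+1 : ℕ)) : ℤ) - r by refine ⟨by omega, hb, by push_cast at hab ⊢; omega⟩)]
    obtain ⟨an, rfl⟩ := Int.eq_ofNat_of_zero_le ha
    obtain ⟨bn, rfl⟩ := Int.eq_ofNat_of_zero_le hb
    have hk : an + bn + r = k := by push_cast at hab; omega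
    have htn : ((bn : ℤ)).toNat = bn := by omega
    rw [htn]
    have e1 : k - r = an + bn := by omega
    have e2 : k + 1 - r = an + bn + 1 := by omega
    rw [e1, e2]
    have key : (an+1) * ((k+1).choose r) * ((an+bn+1).choose bn)
        = (k+1) * (k.choose r) * ((an+bn).choose bn) := by
      have hc : (k+1).choose (r+1) * (r+1) = (k+1).choose r * ((k+1) - r) :=
        Nat.choose_succ_right_eq (k+1) r
      have hc2 : (k+1) * k.choose r = (k+1).choose (r+1) * (r+1) :=
        Nat.add_one_mul_choose_eq k r
      have e3 : k + 1 - r = an + bn + 1 := by omega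
      rw [e3] at hc
      calc (an+1) * ((k+1).choose r) * ((an+bn+1).choose bn)
          = ((k+1).choose r) * ((an+1) * ((an+bn+1).choose bn)) := by ring
        _ = ((k+1).choose r) * ((an+bn+1) * ((an+bn).choose bn)) := by rw [nat_core]
        _ = ((k+1).choose r * (an+bn+1)) * ((an+bn).choose bn) := by ring
        _ = ((k+1).choose (r+1) * (r+1)) * ((an+bn).choose bn) := by rw [hc]
        _ = ((k+1) * k.choose r) * ((an+bn).choose bn) := by rw [← hc2]
        _ = (k+1) * (k.choose r) * ((an+bn).choose bn) := by ring
    have keyC : ((an:ℂ)+1) * (((k+1).choose r : ℕ)) * (((an+bn+1).choose bn : ℕ))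
        = ((k:ℂ)+1) * ((k.choose r : ℕ)) * (((an+bn).choose bn : ℕ)) := by
      exact_mod_cast congrArg (fun n : ℕ => (n : ℂ)) key
    push_cast
    linear_combination ((-1:ℂ)^r * (-1:ℂ)^bn) * keyC
  · rw [ec_neg h1, mul_zero]
    by_cases h2 : 0 ≤ a + 1 ∧ 0 ≤ b ∧ (a+1) + b = (((k+1 : ℕ)) : ℤ) - r
    · obtain ⟨ha, hb, hab⟩ := h2
      have ha' : a = -1 := by
        by_contra hne
        exact h1 ⟨by omega, hb, by push_cast at hab ⊢; omega⟩
      rw [ec_pos ⟨ha, hb, hab⟩, ha']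
      push_cast
      ring
    · rw [ec_neg h2, mul_zero]

end Aux4
section Aux5
variable {N : ℕ}

theorem E_mul_comm (a b : ℤ) (k : ℕ) (x : Gr 2 N) :
    x * expEvenCoef N a b k = expEvenCoef N a b k * x := by
  rw [expEvenCoef_eq, mul_smul_comm, smul_mul_assoc, Finset.mul_sum, Finset.sum_mul]
  congr 1
  refine Finset.sum_congr rfl (fun r _ => ?_)
  rw [mul_smul_comm, smul_mul_assoc, (qq_pow_commute r x).eq]

theorem E_succ (a b : ℤ) (k : ℕ) :
    ((a : ℂ)+1) • expEvenCoef N (a+1) b (k+1) = expEvenCoef N a b k := by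
  rw [expEvenCoef_eq, expEvenCoef_eq]
  rw [smul_comm, Finset.smul_sum]
  have h1 : ∑ r ∈ Finset.range (k+2), ((a : ℂ)+1) • (ec (a+1) b (k+1) r • qq N ^ r)
      = ((k : ℂ)+1) • ∑ r ∈ Finset.range (k+1), ec a b k r • qq N ^ r := by
    rw [Finset.sum_range_succ, Finset.smul_sum]
    have hlast : ((a : ℂ)+1) • (ec (a+1) b (k+1) (k+1) • qq N ^ (k+1)) = 0 := by
      rw [smul_smul, ec_S2, ec_zero_of_top a b k (k+1) (Nat.lt_succ_self k)]
      simp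
    rw [hlast, add_zero]
    refine Finset.sum_congr rfl (fun r _ => ?_)
    rw [smul_smul, ec_S2, smul_smul]
  rw [h1, smul_smul]
  have hk : ((k+1).factorial : ℂ) = ((k:ℂ) + 1) * (k.factorial : ℂ) := by
    rw [Nat.factorial_succ]; push_cast; ring
  have hne : ((k:ℂ) + 1) ≠ 0 := by
    have hq : (((k+1:ℕ)):ℂ) ≠ 0 := Nat.cast_ne_zero.mpr (Nat.succ_ne_zero k)
    push_cast at hq
    exact hq
  have hne2 : (k.factorial : ℂ) ≠ 0 := Nat.cast_ne_zero.mpr (Nat.factorial_ne_zero _)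
  have hsc : (((k+1).factorial : ℂ))⁻¹ * ((k:ℂ)+1) = ((k.factorial : ℂ))⁻¹ := by
    rw [hk]
    field_simp
  rw [hsc]

theorem E_zero (a b : ℤ) :
    ((a : ℂ)+1) • expEvenCoef N (a+1) b 0 = 0 := by
  rw [expEvenCoef_eq]
  rw [Finset.sum_range_one]
  by_cases h : 0 ≤ a + 1 ∧ 0 ≤ b ∧ (a+1) + b = ((0 : ℕ) : ℤ) - (0 : ℕ)
  · have ha : a = -1 := by
      obtain ⟨h1, h2, h3⟩ := h
      push_cast at h3
      omega
    rw [ha]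
    norm_num
  · rw [ec_neg h]
    simp

theorem dgv_qq_pow_mul (i : Fin N) (r : ℕ) (x : Gr 2 N) :
    dgv 0 i (qq N ^ r * x)
      = (r : ℂ) • (gv 1 i * (qq N ^ (r-1) * x)) + qq N ^ r * dgv 0 i x := by
  cases r with
  | zero => simp [pow_zero, one_mul]
  | succ r =>
      have := dgv_qq_pow_succ_mul i r x
      rw [this]
      push_cast
      norm_num

theorem dgv_E_mul (i : Fin N) (a b : ℤ) (k : ℕ) (x : Gr 2 N) :
    dgv 0 i (expEvenCoef N a b k * x)
      = (-((a : ℂ)+1)) • (gv 1 i * (expEvenCoef N (a+1) b k * x))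
        + expEvenCoef N a b k * dgv 0 i x := by
  simp only [expEvenCoef_eq, smul_mul_assoc, Finset.sum_mul, map_smul, map_sum]
  rw [Finset.sum_congr rfl (fun r _ => congrArg (ec a b k r • ·) (dgv_qq_pow_mul i r x))]
  simp only [smul_add, Finset.sum_add_distrib]
  congr 1
  -- remaining: (k!)⁻¹ • Σ ec a b k r • ((r:ℂ) • (gv1 * (qq^{r-1} * x)))
  --          = (-(a+1)) • (gv1 * ((k!)⁻¹ • Σ ec (a+1) b k r • (qq^r * x)))
  have hshift : ∑ r ∈ Finset.range (k+1), ec a b k r • ((r : ℂ) • (gv 1 i * (qq N ^ (r-1) * x)))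
      = ∑ r ∈ Finset.range (k+1), (-((a:ℂ)+1) * ec (a+1) b k r) • (gv 1 i * (qq N ^ r * x)) := by
    rw [Finset.sum_range_succ' _ k, Finset.sum_range_succ]
    have hk : (-((a:ℂ)+1) * ec (a+1) b k k) • (gv 1 i * (qq N ^ k * x)) = 0 := by
      rw [← ec_S1, ec_zero_of_top a b k (k+1) (Nat.lt_succ_self k)]
      simp
    rw [hk]
    simp only [Nat.cast_zero, zero_smul, smul_zero, add_zero]
    refine Finset.sum_congr rfl (fun r _ => ?_)
    rw [smul_smul, mul_comm (ec a b k (r+1)), Nat.add_sub_cancel]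
    push_cast
    rw [ec_S1]
  rw [hshift]
  simp only [Finset.smul_sum, Finset.mul_sum, mul_smul_comm, smul_smul]
  refine Finset.sum_congr rfl (fun r _ => ?_)
  congr 1
  ring

end Aux5
section Aux6
variable {N : ℕ}

theorem neg_one_pow_mod (x : ℕ) : ((-1 : ℂ))^x = (-1)^(x % 2) := by
  conv_lhs => rw [← Nat.div_add_mod x 2]
  rw [pow_add, pow_mul, neg_one_sq, one_pow, one_mul]

theorem neg_one_pow_congr {x y : ℕ} (h : x % 2 = y % 2) : ((-1 : ℂ))^x = (-1)^y := by
  rw [neg_one_pow_mod x, neg_one_pow_mod y, h]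

theorem tri_succ (n : ℕ) : (n+1)*(n+2)/2 = n*(n+1)/2 + (n+1) := by
  have h : (n+1)*(n+2) = n*(n+1) + 2*(n+1) := by ring
  rw [h, Nat.add_mul_div_left _ _ (by norm_num : (0:ℕ) < 2)]

theorem sign_succ (m : ℕ) :
    ((-1 : ℂ))^(m+1) * (-1)^((m+1)*(m+1+1)/2) = (-1)^(m*(m+1)/2) := by
  rw [← pow_add]
  apply neg_one_pow_congr
  have h : (m+1)*(m+1+1)/2 = m*(m+1)/2 + (m+1) := tri_succ m
  rw [h]
  generalize m*(m+1)/2 = t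
  omega

theorem sign_succ' (m : ℕ) :
    ((-1 : ℂ))^m * (-1)^(m*(m+1)/2) = -((-1 : ℂ))^((m+1)*(m+1+1)/2) := by
  have h1 : -((-1 : ℂ))^((m+1)*(m+1+1)/2) = ((-1 : ℂ))^((m+1)*(m+1+1)/2 + 1) := by
    rw [pow_succ]
    ring
  rw [h1, ← pow_add]
  apply neg_one_pow_congr
  have h : (m+1)*(m+1+1)/2 = m*(m+1)/2 + (m+1) := tri_succ m
  rw [h]
  generalize m*(m+1)/2 = t
  omega

end Aux6

theorem stmt17' (i : Fin N) : DZ i (expNK N) = chiMul i (expNK N) := by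
  funext a b k K
  simp only [DZ, chiMul, expNK]
  by_cases hiK : i ∈ K
  · -- case i ∈ K
    have hm : K.card = (K.erase i).card + 1 := by
      rw [Finset.card_erase_of_mem hiK]
      have h1 : 0 < K.card := Finset.card_pos.mpr ⟨i, hiK⟩
      omega
    have hfvT : fv i * (expEvenCoef N (a+1) b k * tK K) = 0 := by
      rw [← mul_assoc, E_mul_comm, mul_assoc, fv_mul_tK_mem i K hiK, mul_zero]
    have heq : gv 0 i * (expEvenCoef N (a+1) b k * tK K)
        = gv 1 i * (expEvenCoef N (a+1) b k * tK K) := by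
      have h' := hfvT
      rw [fv, sub_mul] at h'
      exact sub_eq_zero.mp h'
    have key : dgv 0 i (expEvenCoef N a b k * tK K)
        + gv 0 i * (((a : ℂ)+1) • (expEvenCoef N (a+1) b k * tK K))
        = ((-1 : ℂ))^((K.filter (· < i)).card)
            • (expEvenCoef N a b k * tK (K.erase i)) := by
      rw [dgv_E_mul, dgv_tK_mem i K hiK, mul_smul_comm ((a:ℂ)+1), heq,
        mul_smul_comm (((-1:ℂ))^((K.filter (· < i)).card))]
      module
    rw [if_pos hiK, if_neg (by simp [hiK]), sgn_single_erase i K hiK, add_zero,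
      map_smul, smul_comm ((a:ℂ)+1), mul_smul_comm, ← smul_add, key]
    rw [smul_smul, smul_smul, smul_smul, hm]
    congr 1
    linear_combination ((-1:ℂ)^((K.filter (· < i)).card)) * sign_succ (K.erase i).card
  · -- case i ∉ K
    have hfvT : fv i * tK K
        = ((-1 : ℂ))^((K.filter (· < i)).card) • tK (insert i K) := by
      have h := tK_insert i K hiK
      rw [h, smul_smul, ← pow_add]
      rw [Even.neg_one_pow ⟨(K.filter (· < i)).card, rfl⟩, one_smul]
    have h2 : gv 0 i * (expEvenCoef N (a+1) b k * tK K)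
        = gv 1 i * (expEvenCoef N (a+1) b k * tK K)
          + ((-1 : ℂ))^((K.filter (· < i)).card)
            • (expEvenCoef N (a+1) b k * tK (insert i K)) := by
      have h3 : fv i * (expEvenCoef N (a+1) b k * tK K)
          = ((-1 : ℂ))^((K.filter (· < i)).card)
            • (expEvenCoef N (a+1) b k * tK (insert i K)) := by
        rw [← mul_assoc, E_mul_comm, mul_assoc, hfvT, mul_smul_comm]
      rw [fv, sub_mul] at h3
      have h4 := sub_eq_iff_eq_add.mp h3
      rw [h4]
      ring_nf
      rw [add_comm]
    have key : dgv 0 i (expEvenCoef N a b k * tK K)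
        + gv 0 i * (((a : ℂ)+1) • (expEvenCoef N (a+1) b k * tK K))
        = ((-1 : ℂ))^((K.filter (· < i)).card)
            • (((a : ℂ)+1) • (expEvenCoef N (a+1) b k * tK (insert i K))) := by
      rw [dgv_E_mul, dgv_tK_notMem i K hiK, mul_zero, add_zero,
        mul_smul_comm ((a:ℂ)+1), h2]
      module
    rw [if_neg hiK, zero_add, map_smul, smul_comm ((a:ℂ)+1), mul_smul_comm,
      ← smul_add, key]
    have hsm : ((a : ℂ)+1) • (expEvenCoef N (a+1) b k * tK (insert i K))
        = (((a : ℂ)+1) • expEvenCoef N (a+1) b k) * tK (insert i K) :=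
      (smul_mul_assoc _ _ _).symm
    rw [hsm]
    cases k with
    | zero =>
        rw [E_zero, zero_mul]
        rw [if_neg (by simp)]
        simp
    | succ k' =>
        rw [E_succ a b k']
        rw [if_pos ⟨hiK, Nat.succ_le_succ (Nat.zero_le _)⟩]
        have hci : (insert i K).card = K.card + 1 := Finset.card_insert_of_notMem hiK
        rw [hci, smul_smul, smul_smul, smul_smul]
        have hk1 : k' + 1 - 1 = k' := rfl
        rw [hk1]
        congr 1
        linear_combination ((-1:ℂ)^((K.filter (· < i)).card)) * sign_succ' K.card

/-- In the `N_K = N` parameter algebra (`λ` even, `χ^i` odd with `[χ^i,χ^j] = -2δ_{ij}λ`,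
`[λ,χ^i] = 0`), setting `(Z-W)Λ = (z-w-Σθ^iζ^i)λ + Σ(θ^i-ζ^i)χ^i`, the exponential
satisfies `D^i_Z exp((Z-W)Λ) = χ^i exp((Z-W)Λ)`, where `D^i_Z = ∂_{θ^i} + θ^i∂_z`. -/
theorem stmt17 (N : ℕ) (i : Fin N) : DZ i (expNK N) = chiMul i (expNK N) :=
  stmt17' i

end Stmt17
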